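/- arXiv:2504.13986 — 7 statements merged into one kernel-verified Lean document; each statement's English description precedes it below -/
import Mathlib

section
/- With the inductive definition of ≤_{∅S} for a sequence S of lexicographic revisions from the flat state, for any sequences R and Q of formulas: if I ≤_{∅(R++Q)} J then I ≤_{∅Q} J. -/
/-- Propositional formulas over variables of type `α`. -/
inductive PropForm (α : Type) : Type
  | var : α → PropForm α
  | tru : PropForm α
  | fls : PropForm α
  | neg : PropForm α → PropForm α
  | conj : PropForm α → PropForm α → PropForm α
  | disj : PropForm α → PropForm α → PropForm α

namespace PropForm
/-- Evaluation of a formula in a valuation (model). -/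
def eval {α : Type} (v : α → Bool) : PropForm α → Bool
  | var a => v a
  | tru => true
  | fls => false
  | neg f => !(eval v f)
  | conj f g => eval v f && eval v g
  | disj f g => eval v f || eval v g
end PropForm

/-- A model `I` satisfies formula `A`. -/
def Sat {α : Type} (I : α → Bool) (A : PropForm α) : Prop := PropForm.eval I A = true

/-- The order induced by a single formula: `I ≤_A J` iff `I ⊨ A` or `J ⊭ A`. -/
def leA {α : Type} (A : PropForm α) (I J : α → Bool) : Prop := Sat I A ∨ ¬ Sat J A

/-- Auxiliary: the order generated from the flat state by a revision sequence given
in reverse order (most recent revision first). -/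
def leSeqRev {α : Type} (I J : α → Bool) : List (PropForm α) → Prop
  | [] => True
  | A :: S' => leA A I J ∧ (¬ leA A J I ∨ leSeqRev I J S')

/-- `I ≤_{∅S} J`: the order generated from the flat state by the sequence `S` of
lexicographic revisions (given in chronological order, so the last element of `S`
is the most recent revision).  It satisfies `leSeq [] I J ↔ True` and
`leSeq (S' ++ [A]) I J ↔ leA A I J ∧ (¬ leA A J I ∨ leSeq S' I J)`. -/
def leSeq {α : Type} (S : List (PropForm α)) (I J : α → Bool) : Prop :=
  leSeqRev I J S.reverse

/-- `I ≡_{∅S} J`: equivalence of models in the order generated by `S`. -/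
def equivSeq {α : Type} (S : List (PropForm α)) (I J : α → Bool) : Prop :=
  leSeq S I J ∧ leSeq S J I

/-- `I ≤_{∅(R++Q)} J` implies `I ≤_{∅Q} J`. -/
theorem leSeq_append_monotone {α : Type} (R Q : List (PropForm α)) (I J : α → Bool)
    (h : leSeq (R ++ Q) I J) : leSeq Q I J := by
  have aux : ∀ (L M : List (PropForm α)), leSeqRev I J (L ++ M) → leSeqRev I J L := by
    intro L
    induction L with
    | nil => intro M _; trivial
    | cons A L ih =>
      intro M h
      exact ⟨h.1, h.2.imp_right (ih M)⟩
  have := aux Q.reverse R.reverse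
  rw [leSeq, List.reverse_append] at h
  exact this h
end

section
/- With the inductive definition of ≤_{∅S}, the strict order I <_{∅Q} J (defined as I ≤_{∅Q} J and ¬(J ≤_{∅Q} I)) is preserved under prefixing: if I <_{∅Q} J then I <_{∅(R++Q)} J for any sequence R. -/
lemma leSeqRev_append {α : Type} (I J : α → Bool) (L M : List (PropForm α))
    (h1 : leSeqRev I J L) (h2 : ¬ leSeqRev J I L) :
    leSeqRev I J (L ++ M) ∧ ¬ leSeqRev J I (L ++ M) := by
  induction L with
  | nil => exact absurd trivial h2
  | cons A L' ih =>
    obtain ⟨hA, hrest⟩ := h1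
    by_cases hJI : leA A J I
    · have h2' : ¬ (¬ leA A I J ∨ leSeqRev J I L') := fun hor => h2 ⟨hJI, hor⟩
      push_neg at h2'
      have hL' : leSeqRev I J L' := hrest.resolve_left (fun hn => hn hJI)
      obtain ⟨m1, m2⟩ := ih hL' h2'.2
      exact ⟨⟨hA, Or.inr m1⟩, fun ⟨_, hor⟩ => hor.elim (fun hn => hn hA) m2⟩
    · exact ⟨⟨hA, Or.inl hJI⟩, fun ⟨hc, _⟩ => hJI hc⟩

/-- the strict order `I <_{∅Q} J` is preserved when prefixing revisions. -/
theorem ltSeq_prefix {α : Type} (R Q : List (PropForm α)) (I J : α → Bool)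
    (h : leSeq Q I J ∧ ¬ leSeq Q J I) :
    leSeq (R ++ Q) I J ∧ ¬ leSeq (R ++ Q) J I := by
  unfold leSeq at *
  rw [List.reverse_append]
  exact leSeqRev_append I J Q.reverse R.reverse h.1 h.2
end

section
/- Define I ≡_{∅S} J as I ≤_{∅S} J and J ≤_{∅S} I. Then for any sequences S and R of formulas, I ≡_{∅(S++R)} J holds if and only if both I ≡_{∅S} J and I ≡_{∅R} J hold. -/
lemma equivRev {α : Type} (I J : α → Bool) (L : List (PropForm α)) :
    (leSeqRev I J L ∧ leSeqRev J I L) ↔ ∀ A ∈ L, leA A I J ∧ leA A J I := by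
  induction L with
  | nil => simp [leSeqRev]
  | cons A S' ih =>
    simp only [leSeqRev, List.mem_cons]
    constructor
    · rintro ⟨⟨h1, h2⟩, ⟨h3, h4⟩⟩
      have hrest : leSeqRev I J S' ∧ leSeqRev J I S' := by
        constructor
        · rcases h2 with h | h
          · exact absurd h3 h
          · exact h
        · rcases h4 with h | h
          · exact absurd h1 h
          · exact h
      intro B hB
      rcases hB with rfl | hB
      · exact ⟨h1, h3⟩
      · exact ih.mp hrest B hB
    · intro h
      have hA := h A (Or.inl rfl)
      have hrest := ih.mpr (fun B hB => h B (Or.inr hB))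
      exact ⟨⟨hA.1, Or.inr hrest.1⟩, ⟨hA.2, Or.inr hrest.2⟩⟩

/-- STATEMENT 5: `I ≡_{∅(S++R)} J` iff `I ≡_{∅S} J` and `I ≡_{∅R} J`. -/
theorem equivSeq_append {α : Type} (S R : List (PropForm α)) (I J : α → Bool) :
    equivSeq (S ++ R) I J ↔ (equivSeq S I J ∧ equivSeq R I J) := by
  simp only [equivSeq, leSeq, equivRev, List.mem_reverse, List.mem_append]
  constructor
  · intro h
    exact ⟨fun A hA => h A (Or.inl hA), fun A hA => h A (Or.inr hA)⟩
  · rintro ⟨h1, h2⟩ A (hA | hA)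
    · exact h1 A hA
    · exact h2 A hA
end

section
/- Two models I and J are equivalent in the order ∅S generated by the lexicographic revision sequence S = [S_1,…,S_m] from the flat state if and only if for every Q-combination Q of S_1,…,S_m, I and J give the same truth value to Q. -/
/-- The Q-combination of formulas `S` determined by the Boolean vector `B`:
the conjunction over `i` of `S i` if `B i = true` and of `¬ S i` if `B i = false`. -/
def qcomb {α : Type} : List Bool → List (PropForm α) → PropForm α
  | b :: bs, s :: ss => PropForm.conj (if b then s else PropForm.neg s) (qcomb bs ss)
  | _, _ => PropForm.tru

lemma equiv_aux {α : Type} (I J : α → Bool) :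
    ∀ L : List (PropForm α),
      (leSeqRev I J L ∧ leSeqRev J I L) ↔ ∀ A ∈ L, (Sat I A ↔ Sat J A) := by
  intro L
  induction L with
  | nil => simp [leSeqRev]
  | cons A L ih =>
    simp only [leSeqRev, List.mem_cons]
    constructor
    · rintro ⟨⟨h1, h2⟩, ⟨h3, h4⟩⟩
      have hrest : leSeqRev I J L ∧ leSeqRev J I L := by
        constructor
        · rcases h2 with h | h
          · exact absurd h3 h
          · exact h
        · rcases h4 with h | h
          · exact absurd h1 h
          · exact h
      intro B hB
      rcases hB with rfl | hB
      · unfold leA at h1 h3; tauto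
      · exact (ih.mp hrest) B hB
    · intro h
      have hA : Sat I A ↔ Sat J A := h A (Or.inl rfl)
      have hrest := ih.mpr (fun B hB => h B (Or.inr hB))
      unfold leA
      refine ⟨⟨?_, ?_⟩, ⟨?_, ?_⟩⟩ <;> tauto

lemma sat_qcomb_self {α : Type} (I : α → Bool) :
    ∀ S : List (PropForm α), Sat I (qcomb (S.map (PropForm.eval I)) S) := by
  intro S
  induction S with
  | nil => simp [qcomb, Sat, PropForm.eval]
  | cons A S ih =>
    simp only [List.map_cons, qcomb, Sat, PropForm.eval]
    cases h : PropForm.eval I A <;> simp [h, PropForm.eval] <;> exact ih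

lemma sat_qcomb_map {α : Type} (I J : α → Bool) :
    ∀ S : List (PropForm α), Sat J (qcomb (S.map (PropForm.eval I)) S) →
      ∀ A ∈ S, PropForm.eval J A = PropForm.eval I A := by
  intro S
  induction S with
  | nil => simp
  | cons A S ih =>
    simp only [List.map_cons, qcomb, Sat, PropForm.eval, Bool.and_eq_true]
    rintro ⟨h1, h2⟩ B hB
    rcases List.mem_cons.mp hB with rfl | hB
    · cases h : PropForm.eval I B <;> simp [h, PropForm.eval] at h1 <;> simp [h1]
    · exact ih h2 B hB

lemma eval_qcomb_congr {α : Type} (I J : α → Bool) :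
    ∀ (B : List Bool) (S : List (PropForm α)),
      (∀ A ∈ S, PropForm.eval I A = PropForm.eval J A) →
      PropForm.eval I (qcomb B S) = PropForm.eval J (qcomb B S) := by
  intro B
  induction B with
  | nil => intro S _; cases S <;> simp [qcomb, PropForm.eval]
  | cons b bs ih =>
    intro S hS
    cases S with
    | nil => simp [qcomb, PropForm.eval]
    | cons A S =>
      simp only [qcomb, PropForm.eval]
      rw [ih S (fun A hA => hS A (List.mem_cons_of_mem _ hA))]
      cases b <;> simp [PropForm.eval, hS A List.mem_cons_self]

/-- STATEMENT 9: `I ≡_{∅S} J` iff `I` and `J` give the same truth value to every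
Q-combination of the formulas of `S`. -/
theorem equivSeq_iff_qcomb {α : Type} (S : List (PropForm α)) (I J : α → Bool) :
    equivSeq S I J ↔
      ∀ B : List Bool, B.length = S.length →
        (Sat I (qcomb B S) ↔ Sat J (qcomb B S)) := by
  have key : equivSeq S I J ↔ ∀ A ∈ S, (Sat I A ↔ Sat J A) := by
    rw [equivSeq, leSeq, leSeq, equiv_aux]
    simp
  rw [key]
  constructor
  · intro h B hB
    have h' : ∀ A ∈ S, PropForm.eval I A = PropForm.eval J A := by
      intro A hA
      have := h A hA
      unfold Sat at this
      cases hI : PropForm.eval I A <;> cases hJ : PropForm.eval J A <;> simp_all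
    unfold Sat
    rw [eval_qcomb_congr I J B S h']
  · intro h A hA
    have hlen : (S.map (PropForm.eval I)).length = S.length := by simp
    have h1 := (h _ hlen).mp (sat_qcomb_self I S)
    have := sat_qcomb_map I J S h1 A hA
    unfold Sat
    rw [this]
end

section
/- The order ∅[S_1,S_2] coincides with ∅[S_2] if and only if one of the following holds: S_1 is unsatisfiable, S_1 is a tautology, S_1 is logically equivalent to S_2, or S_1 is logically equivalent to ¬S_2. -/
/-- STATEMENT 12: `∅[S₁,S₂]` coincides with `∅[S₂]` iff `S₁` is unsatisfiable,
tautological, equivalent to `S₂`, or equivalent to `¬S₂`. -/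
theorem redundant_two {α : Type} (S1 S2 : PropForm α) :
    (∀ I J : α → Bool, leSeq [S1, S2] I J ↔ leSeq [S2] I J) ↔
      ((∀ I : α → Bool, ¬ Sat I S1) ∨
       (∀ I : α → Bool, Sat I S1) ∨
       (∀ I : α → Bool, Sat I S1 ↔ Sat I S2) ∨
       (∀ I : α → Bool, Sat I S1 ↔ ¬ Sat I S2)) := by
  have key : (∀ I J : α → Bool, leSeq [S1, S2] I J ↔ leSeq [S2] I J) ↔
      (∀ I J : α → Bool, (Sat I S2 ↔ Sat J S2) → (Sat I S1 ↔ Sat J S1)) := by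
    constructor
    · intro h I J hQ
      have h1 := h I J
      have h2 := h J I
      simp only [leSeq, List.reverse, List.reverseAux, leSeqRev, leA, or_true, and_true] at h1 h2
      tauto
    · intro h I J
      have h1 := h I J
      simp only [leSeq, List.reverse, List.reverseAux, leSeqRev, leA, or_true, and_true]
      tauto
  rw [key]
  constructor
  · intro hk
    by_cases h1 : ∀ I, ¬ Sat I S1
    · exact Or.inl h1
    push_neg at h1; obtain ⟨I0, hI0⟩ := h1
    by_cases h2 : ∀ I, Sat I S1
    · exact Or.inr (Or.inl h2)
    push_neg at h2; obtain ⟨J0, hJ0⟩ := h2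
    have hne : ¬ (Sat I0 S2 ↔ Sat J0 S2) := fun hq => hJ0 ((hk I0 J0 hq).mp hI0)
    by_cases hI0Q : Sat I0 S2
    · refine Or.inr (Or.inr (Or.inl fun I => ?_))
      by_cases hIQ : Sat I S2
      · have := hk I I0 (by tauto); tauto
      · have := hk I J0 (by tauto); tauto
    · refine Or.inr (Or.inr (Or.inr fun I => ?_))
      by_cases hIQ : Sat I S2
      · have := hk I J0 (by tauto); tauto
      · have := hk I I0 (by tauto); tauto
  · rintro (h | h | h | h) I J hQ <;>
    · have hI := h I
      have hJ := h J
      tauto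
end

section
/- If S_i is one of the formulas occurring in the sequence S, then both ∅([S_i] ++ S) and ∅([¬S_i] ++ S) coincide with ∅S. -/
lemma leSeqRev_append_single {α : Type} (I J : α → Bool) (B : PropForm α) :
    ∀ L : List (PropForm α),
      leSeqRev I J (L ++ [B]) ↔ leSeqRev I J L ∧ (¬ leSeqRev J I L ∨ leA B I J)
  | [] => by simp [leSeqRev]
  | A :: L' => by
    have ih := leSeqRev_append_single I J B L'
    simp only [List.cons_append, leSeqRev, ih]
    tauto

lemma tie_of_both {α : Type} (I J : α → Bool) :
    ∀ L : List (PropForm α), leSeqRev I J L → leSeqRev J I L →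
      ∀ A ∈ L, (Sat I A ↔ Sat J A)
  | [] => by intro _ _ A hA; simp at hA
  | B :: L' => by
    intro h1 h2 A hA
    obtain ⟨p, hp⟩ := h1
    obtain ⟨q, hq⟩ := h2
    rcases List.mem_cons.mp hA with rfl | hA'
    · unfold leA at p q; tauto
    · have r1 : leSeqRev I J L' := by tauto
      have r2 : leSeqRev J I L' := by tauto
      exact tie_of_both I J L' r1 r2 A hA'

/-- prepending a formula of the sequence, or its negation,
does not change the order. -/
theorem prepend_member_redundant {α : Type} (S : List (PropForm α)) (Si : PropForm α)
    (h : Si ∈ S) :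
    (∀ I J : α → Bool, leSeq (Si :: S) I J ↔ leSeq S I J) ∧
    (∀ I J : α → Bool, leSeq (PropForm.neg Si :: S) I J ↔ leSeq S I J) := by
  have key : ∀ B : PropForm α, (∀ I J : α → Bool,
      (Sat I Si ↔ Sat J Si) → leA B I J) →
      ∀ I J : α → Bool, leSeq (B :: S) I J ↔ leSeq S I J := by
    intro B hB I J
    unfold leSeq
    rw [List.reverse_cons, leSeqRev_append_single]
    constructor
    · exact fun h => h.1
    · intro hle
      refine ⟨hle, ?_⟩
      by_cases h2 : leSeqRev J I S.reverse
      · right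
        exact hB I J (tie_of_both I J S.reverse hle h2 Si (List.mem_reverse.mpr h))
      · left; exact h2
  constructor
  · exact key Si (fun I J ht => by unfold leA; tauto)
  · refine key (PropForm.neg Si) (fun I J ht => ?_)
    unfold leA Sat PropForm.eval
    unfold Sat at ht
    rcases Bool.eq_false_or_eq_true (PropForm.eval I Si) with h1 | h1 <;>
      simp_all
end

section
/- There exist sequences S and R of formulas and a formula F such that ∅(R ++ [F] ++ S) coincides with ∅(R ++ S) but ∅([F] ++ S) does not coincide with ∅S. Concretely, S = [a], F = ¬a ∨ b, R = [a ∧ b] over two propositional variables a, b is such a counterexample. -/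
/-- The variable `a` (over the two-variable alphabet `Bool`). -/
def fa : PropForm Bool := PropForm.var true
/-- The variable `b`. -/
def fb : PropForm Bool := PropForm.var false

/-- STATEMENT 17: there exist `S`, `R`, `F` such that `∅(R++[F]++S)` coincides with
`∅(R++S)` but `∅([F]++S)` does not coincide with `∅S`; concretely `S = [a]`,
`F = ¬a ∨ b`, `R = [a ∧ b]`. -/
theorem redundancy_not_cut :
    ∃ (S R : List (PropForm Bool)) (F : PropForm Bool),
      S = [fa] ∧ F = PropForm.disj (PropForm.neg fa) fb ∧ R = [PropForm.conj fa fb] ∧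
      (∀ I J : Bool → Bool, leSeq (R ++ [F] ++ S) I J ↔ leSeq (R ++ S) I J) ∧
      ¬ (∀ I J : Bool → Bool, leSeq ([F] ++ S) I J ↔ leSeq S I J) := by
  refine ⟨_, _, _, rfl, rfl, rfl, ?_, ?_⟩
  · intro I J
    simp only [leSeq, leSeqRev, leA, Sat, List.reverse, fa, fb, PropForm.eval,
      List.append_assoc, List.cons_append, List.nil_append, List.reverse_append,
      List.reverse_cons, List.reverse_nil]
    cases hI1 : I true <;> cases hI0 : I false <;> cases hJ1 : J true <;> cases hJ0 : J false <;>
      simp [hI1, hI0, hJ1, hJ0, leSeqRev, leA, Sat, PropForm.eval]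
  · intro h
    have := (h (fun x => x) (fun _ => true)).mpr
    simp only [leSeq, leSeqRev, leA, Sat, fa, fb, PropForm.eval, List.cons_append,
      List.nil_append, List.reverse_cons, List.reverse_nil] at this
    simp at this
end
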